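/- Let Θ = (π_1,…,π_d,π) be an isotopism with the property that the tuple of cycle lengths (l_{π_1,i_1},…,l_{π_d,i_d},l_{π,s}) is lcm-compatible for a given (i_1,…,i_d,s) ∈ [n_1]×…×[n_d]×[n]. Then the set of entries E = {(π_1^m(i_1),…,π_d^m(i_d),π^m(s)) : 1 ≤ m ≤ lcm(l_{π_1,i_1},…,l_{π_d,i_d},l_{π,s})} is the set of entries of a partial Latin hyper-rectangle that admits Θ as an autotopism. -/

import Mathlib

/-- A tuple of positive integers is lcm-compatible if removing any single entry
does not change the least common multiple. -/
def lcmCompatible {k : ℕ} (l : Fin k → ℕ) : Prop :=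
  ∀ j : Fin k, Finset.lcm (Finset.univ.erase j) l = Finset.lcm Finset.univ l

/-- A partial Latin hyper-rectangle: along each line each symbol occurs at most once. -/
def IsPLH {d n : ℕ} {nd : Fin d → ℕ} (P : (∀ j, Fin (nd j)) → Option (Fin n)) : Prop :=
  ∀ k : Fin d, ∀ i i' : ∀ j, Fin (nd j), (∀ j, j ≠ k → i j = i' j) →
    ∀ s, P i = some s → P i' = some s → i = i'

/-- `Θ = (π, σ)` is an autotopism of `P`. -/
def IsAutotopism {d n : ℕ} {nd : Fin d → ℕ} (π : ∀ j, Equiv.Perm (Fin (nd j)))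
    (σ : Equiv.Perm (Fin n)) (P : (∀ j, Fin (nd j)) → Option (Fin n)) : Prop :=
  (fun x => Option.map σ (P fun j => (π j)⁻¹ (x j))) = P

private lemma perm_minPeriod_pos {α : Type*} [Fintype α] (f : Equiv.Perm α) (x : α) :
    0 < Function.minimalPeriod (⇑f) x := by
  apply Function.IsPeriodicPt.minimalPeriod_pos (orderOf_pos f)
  show (⇑f)^[orderOf f] x = x
  rw [Equiv.Perm.iterate_eq_pow, pow_orderOf_eq_one]
  rfl

private lemma perm_pow_apply_eq_iff {α : Type*} [Fintype α] (f : Equiv.Perm α) (x : α)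
    (a b : ℕ) : (f ^ a) x = (f ^ b) x ↔ a ≡ b [MOD Function.minimalPeriod (⇑f) x] := by
  have hT := perm_minPeriod_pos f x
  constructor
  · intro hab
    have key : (⇑f)^[a % Function.minimalPeriod (⇑f) x] x
        = (⇑f)^[b % Function.minimalPeriod (⇑f) x] x := by
      rw [Function.iterate_mod_minimalPeriod_eq, Function.iterate_mod_minimalPeriod_eq]
      exact hab
    exact Function.iterate_injOn_Iio_minimalPeriod (Nat.mod_lt _ hT) (Nat.mod_lt _ hT) key
  · intro hab
    have : (⇑f)^[a] x = (⇑f)^[b] x := by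
      rw [← Function.iterate_mod_minimalPeriod_eq, hab,
        Function.iterate_mod_minimalPeriod_eq]
    exact this

/-- For an lcm-compatible tuple, congruence mod all entries but one implies
congruence mod the remaining entry. -/
private lemma lcmCompatible.modEq {k : ℕ} {l : Fin k → ℕ} (hc : lcmCompatible l)
    (j₀ : Fin k) {a b : ℕ} (hj : ∀ j, j ≠ j₀ → a ≡ b [MOD l j]) : a ≡ b [MOD l j₀] := by
  rw [Nat.modEq_iff_dvd]
  have h2 : Finset.lcm (Finset.univ.erase j₀) l ∣ ((b : ℤ) - a).natAbs :=
    Finset.lcm_dvd fun j hjmem => by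
      have := (hj j (Finset.ne_of_mem_erase hjmem)).dvd
      rwa [Int.natCast_dvd] at this
  have h3 : l j₀ ∣ ((b : ℤ) - a).natAbs :=
    dvd_trans (Finset.dvd_lcm (Finset.mem_univ j₀)) ((hc j₀) ▸ h2)
  rwa [← Int.natCast_dvd] at h3

/-- if the tuple of cycle lengths of `(i_1,…,i_d,s)` under
`Θ = (π_1,…,π_d,σ)` is lcm-compatible, then
`{(π_1^m(i_1),…,π_d^m(i_d),σ^m(s)) : 1 ≤ m ≤ lcm}` is the set of entries of a
partial Latin hyper-rectangle admitting `Θ` as an autotopism. -/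
theorem stmt8 {d n : ℕ} {nd : Fin d → ℕ} (π : ∀ j, Equiv.Perm (Fin (nd j)))
    (σ : Equiv.Perm (Fin n)) (i₀ : ∀ j, Fin (nd j)) (s₀ : Fin n)
    (h : lcmCompatible (Fin.snoc (fun j => Function.minimalPeriod (⇑(π j)) (i₀ j))
      (Function.minimalPeriod (⇑σ) s₀))) :
    ∃ P : (∀ j, Fin (nd j)) → Option (Fin n), IsPLH P ∧ IsAutotopism π σ P ∧
      ∀ (i : ∀ j, Fin (nd j)) (s : Fin n), P i = some s ↔
        ∃ m : ℕ, 1 ≤ m ∧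
          m ≤ Finset.lcm Finset.univ
            (Fin.snoc (fun j => Function.minimalPeriod (⇑(π j)) (i₀ j))
              (Function.minimalPeriod (⇑σ) s₀)) ∧
          (∀ j, ((π j) ^ m) (i₀ j) = i j) ∧ (σ ^ m) s₀ = s := by
  classical
  set l : Fin (d + 1) → ℕ := Fin.snoc (fun j => Function.minimalPeriod (⇑(π j)) (i₀ j))
    (Function.minimalPeriod (⇑σ) s₀) with hl
  set L := Finset.lcm Finset.univ l with hLdef
  -- basic facts about l
  have hlcast : ∀ j : Fin d, l j.castSucc = Function.minimalPeriod (⇑(π j)) (i₀ j) := by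
    intro j; simp [hl]
  have hllast : l (Fin.last d) = Function.minimalPeriod (⇑σ) s₀ := by simp [hl]
  have hlpos : ∀ j, 0 < l j := by
    intro j
    rcases Fin.eq_castSucc_or_eq_last j with ⟨j', rfl⟩ | rfl
    · rw [hlcast]; exact perm_minPeriod_pos _ _
    · rw [hllast]; exact perm_minPeriod_pos _ _
  have hdvdL : ∀ j, l j ∣ L := fun j => Finset.dvd_lcm (Finset.mem_univ j)
  have hLpos : 0 < L := by
    rcases Nat.eq_zero_or_pos L with h0 | h0
    · exfalso
      rw [hLdef, Finset.lcm_eq_zero_iff] at h0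
      obtain ⟨j, -, hj0⟩ := h0
      exact (hlpos j).ne' hj0
    · exact h0
  -- the predicate and the function
  set Q : (∀ j, Fin (nd j)) → Prop := fun i => ∃ m, ∀ j, ((π j) ^ m) (i₀ j) = i j with hQ
  set P : (∀ j, Fin (nd j)) → Option (Fin n) := fun i =>
    if hq : Q i then some ((σ ^ hq.choose) s₀) else none with hP
  -- value determinedness: the symbol does not depend on the chosen exponent
  have hsig : ∀ a b : ℕ, (∀ j, ((π j) ^ a) (i₀ j) = ((π j) ^ b) (i₀ j)) →
      (σ ^ a) s₀ = (σ ^ b) s₀ := by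
    intro a b hab
    rw [perm_pow_apply_eq_iff, ← hllast]
    refine h.modEq (Fin.last d) fun j hj => ?_
    obtain ⟨j', rfl⟩ := (Fin.eq_castSucc_or_eq_last j).resolve_right hj
    rw [hlcast]
    exact (perm_pow_apply_eq_iff _ _ _ _).1 (hab j')
  have hval : ∀ i (hq : Q i) (m : ℕ), (∀ j, ((π j) ^ m) (i₀ j) = i j) →
      (σ ^ hq.choose) s₀ = (σ ^ m) s₀ := by
    intro i hq m hm
    exact hsig _ _ fun j => (hq.choose_spec j).trans (hm j).symm
  refine ⟨P, ?_, ?_, ?_⟩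
  · -- IsPLH
    intro k i i' hik s hi hi'
    by_cases hq : Q i
    · by_cases hq' : Q i'
      · simp only [hP, dif_pos hq] at hi
        simp only [hP, dif_pos hq'] at hi'
        set a := hq.choose with ha
        set b := hq'.choose with hb
        have hsa : ∀ j, ((π j) ^ a) (i₀ j) = i j := hq.choose_spec
        have hsb : ∀ j, ((π j) ^ b) (i₀ j) = i' j := hq'.choose_spec
        have hss : (σ ^ a) s₀ = (σ ^ b) s₀ := by
          rw [Option.some_inj] at hi hi'; rw [hi, hi']
        have hmk : a ≡ b [MOD l k.castSucc] := by
          refine h.modEq k.castSucc fun j hj => ?_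
          rcases Fin.eq_castSucc_or_eq_last j with ⟨j', rfl⟩ | rfl
          · have hj' : j' ≠ k := fun hc => hj (by rw [hc])
            rw [hlcast]
            refine (perm_pow_apply_eq_iff _ _ _ _).1 ?_
            rw [hsa j', hsb j', hik j' hj']
          · rw [hllast]
            exact (perm_pow_apply_eq_iff _ _ _ _).1 hss
        have hkk : i k = i' k := by
          rw [← hsa k, ← hsb k]
          exact (perm_pow_apply_eq_iff _ _ _ _).2 (by rwa [hlcast] at hmk)
        funext j
        by_cases hjk : j = k
        · subst hjk; exact hkk
        · exact hik j hjk
      · simp only [hP, dif_neg hq'] at hi'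
        exact absurd hi' (by simp)
    · simp only [hP, dif_neg hq] at hi
      exact absurd hi (by simp)
  · -- IsAutotopism
    have hfixπ : ∀ (j : Fin d) (m : ℕ), ((π j) ^ (m + L)) (i₀ j) = ((π j) ^ m) (i₀ j) := by
      intro j m
      refine (perm_pow_apply_eq_iff _ _ _ _).2 ?_
      have : l j.castSucc ∣ L := hdvdL _
      rw [hlcast] at this
      exact (Nat.modEq_iff_dvd' (Nat.le_add_right m L)).2 (by simpa using this) |>.symm
    funext x
    set y : ∀ j, Fin (nd j) := fun j => (π j)⁻¹ (x j) with hy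
    by_cases hq : Q x
    · obtain ⟨m, hm⟩ := hq
      have hw : ∀ j, ((π j) ^ (m + L - 1)) (i₀ j) = y j := by
        intro j
        have h1 : (π j) (((π j) ^ (m + L - 1)) (i₀ j)) = x j := by
          have hL1 : m + L - 1 + 1 = m + L := by omega
          have h2 : (π j) (((π j) ^ (m + L - 1)) (i₀ j)) = ((π j) ^ (m + L)) (i₀ j) := by
            conv_rhs => rw [← hL1]
            rw [pow_succ', Equiv.Perm.mul_apply]
          rw [h2, hfixπ, hm j]
        rw [hy]
        exact (Equiv.eq_symm_apply (π j)).2 h1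
      have hqy : Q y := ⟨m + L - 1, hw⟩
      have hqx : Q x := ⟨m, hm⟩
      show Option.map σ (P y) = P x
      simp only [hP, dif_pos hqy, dif_pos hqx, Option.map_some]
      congr 1
      have h1' : (σ ^ hqy.choose) s₀ = (σ ^ (m + L - 1)) s₀ := hval y hqy (m + L - 1) hw
      have h2 : (σ ^ hqx.choose) s₀ = (σ ^ m) s₀ := hval x hqx m hm
      rw [h1', h2, ← Equiv.Perm.mul_apply, ← pow_succ']
      have hL1 : m + L - 1 + 1 = m + L := by omega
      rw [hL1]
      refine (perm_pow_apply_eq_iff _ _ _ _).2 ?_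
      have hdσ : Function.minimalPeriod (⇑σ) s₀ ∣ L := by rw [← hllast]; exact hdvdL _
      exact ((Nat.modEq_iff_dvd' (Nat.le_add_right m L)).2 (by simpa using hdσ)).symm
    · have hqy : ¬ Q y := by
        intro ⟨m, hm⟩
        refine hq ⟨m + 1, fun j => ?_⟩
        rw [pow_succ', Equiv.Perm.mul_apply, hm j, hy]
        simp
      show Option.map σ (P y) = P x
      simp only [hP, dif_neg hqy, dif_neg hq, Option.map_none]
  · -- characterization
    intro i s
    constructor
    · intro hi
      by_cases hq : Q i
      · simp only [hP, dif_pos hq, Option.some_inj] at hi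
        set m := hq.choose with hm
        have hspec : ∀ j, ((π j) ^ m) (i₀ j) = i j := hq.choose_spec
        set m' := (if m % L = 0 then L else m % L) with hm'
        have h1m' : 1 ≤ m' := by
          rw [hm']
          by_cases h0 : m % L = 0
          · rw [if_pos h0]; exact hLpos
          · rw [if_neg h0]; omega
        have hm'L : m' ≤ L := by
          rw [hm']
          by_cases h0 : m % L = 0
          · rw [if_pos h0]
          · rw [if_neg h0]; exact le_of_lt (Nat.mod_lt _ hLpos)
        have hmod : m' ≡ m [MOD L] := by
          rw [hm']
          by_cases h0 : m % L = 0
          · rw [if_pos h0]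
            calc L ≡ 0 [MOD L] := (Nat.modEq_zero_iff_dvd).2 dvd_rfl
              _ = m % L := h0.symm
              _ ≡ m [MOD L] := Nat.mod_modEq m L
          · rw [if_neg h0]; exact Nat.mod_modEq m L
        refine ⟨m', h1m', hm'L, fun j => ?_, ?_⟩
        · rw [← hspec j]
          refine (perm_pow_apply_eq_iff _ _ _ _).2 (hmod.of_dvd ?_)
          rw [← hlcast j]; exact hdvdL _
        · rw [← hi]
          refine (perm_pow_apply_eq_iff _ _ _ _).2 (hmod.of_dvd ?_)
          rw [← hllast]; exact hdvdL _
      · simp only [hP, dif_neg hq] at hi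
        exact absurd hi (by simp)
    · rintro ⟨m, -, -, hπm, hσm⟩
      have hq : Q i := ⟨m, hπm⟩
      show P i = some s
      simp only [hP, dif_pos hq, Option.some_inj]
      rw [hval i hq m hπm]
      exact hσm
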